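/- Let z_1,...,z_m be pairwise distinct complex numbers. Then for all complex w, z: ∑_{j=1}^m [∏_{k≠j} (z - z_k) · ∏_{k≠j} (w - z_k)] / ∏_{k≠j} (z_j - z_k) = ∑_{j=1}^m [∏_{k=1}^{j-1} (z - z_k)] · [∏_{k=j+1}^m (w - z_k)]. -/

import Mathlib

open Finset Polynomial

/-- Telescoping identity at the nodes. -/
lemma telescope_aux (m i : ℕ) (zs : ℕ → ℂ) (hi : i ∈ Finset.Icc 1 m) (w : ℂ) :
    ∑ j ∈ Finset.Icc 1 m,
      (∏ k ∈ Finset.Icc 1 (j - 1), (zs i - zs k)) *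
        ∏ k ∈ Finset.Icc (j + 1) m, (w - zs k)
    = ∏ k ∈ (Finset.Icc 1 m).erase i, (w - zs k) := by
  obtain ⟨hi1, him⟩ := Finset.mem_Icc.mp hi
  set B : ℕ → ℂ := fun j =>
    (∏ k ∈ Finset.Icc 1 (j - 1), (zs i - zs k)) *
      ∏ k ∈ (Finset.Icc j m).erase i, (w - zs k) with hB
  have hIoc : Finset.Icc 1 m = Finset.Ioc 0 m := by
    ext x; simp; omega
  rw [hIoc, ← Finset.sum_Ioc_consecutive _ (Nat.zero_le i) him]
  have h2 : ∑ j ∈ Finset.Ioc i m,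
      (∏ k ∈ Finset.Icc 1 (j - 1), (zs i - zs k)) *
        ∏ k ∈ Finset.Icc (j + 1) m, (w - zs k) = 0 := by
    apply Finset.sum_eq_zero
    intro j hj
    obtain ⟨hij, hjm⟩ := Finset.mem_Ioc.mp hj
    have : (∏ k ∈ Finset.Icc 1 (j - 1), (zs i - zs k)) = 0 := by
      apply Finset.prod_eq_zero (i := i)
      · exact Finset.mem_Icc.mpr ⟨hi1, by omega⟩
      · exact sub_self _
    rw [this, zero_mul]
  rw [h2, add_zero]
  have key : ∀ j ∈ Finset.Ioc 0 i,
      (∏ k ∈ Finset.Icc 1 (j - 1), (zs i - zs k)) *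
        ∏ k ∈ Finset.Icc (j + 1) m, (w - zs k) = B j - B (j + 1) := by
    intro j hj
    obtain ⟨hj0, hji⟩ := Finset.mem_Ioc.mp hj
    have hjm : j ≤ m := le_trans hji him
    rcases eq_or_lt_of_le hji with rfl | hjlt
    · -- j = i
      have e1 : (Finset.Icc j m).erase j = Finset.Icc (j + 1) m := by
        rw [Finset.Icc_erase_left]
        ext x; simp
      have e2 : B (j + 1) = 0 := by
        rw [hB]
        simp only
        have : (∏ k ∈ Finset.Icc 1 (j + 1 - 1), (zs j - zs k)) = 0 := by
          apply Finset.prod_eq_zero (i := j)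
          · simpa using Finset.mem_Icc.mpr ⟨hj0, le_refl j⟩
          · exact sub_self _
        rw [this, zero_mul]
      rw [e2, sub_zero, hB]
      simp only
      rw [e1]
    · -- j < i
      have hj1m : j + 1 ≤ m := le_trans hjlt him
      have hij1 : i ∈ Finset.Icc (j + 1) m := Finset.mem_Icc.mpr ⟨hjlt, him⟩
      have hjmem : j ∈ (Finset.Icc j m).erase i :=
        Finset.mem_erase.mpr ⟨Nat.ne_of_lt hjlt, Finset.mem_Icc.mpr ⟨le_refl j, hjm⟩⟩
      have e1 : ∏ k ∈ Finset.Icc (j + 1) m, (w - zs k)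
          = (w - zs i) * ∏ k ∈ (Finset.Icc (j + 1) m).erase i, (w - zs k) :=
        (Finset.mul_prod_erase _ _ hij1).symm
      have e2 : ((Finset.Icc j m).erase i).erase j = (Finset.Icc (j + 1) m).erase i := by
        rw [Finset.erase_right_comm, Finset.Icc_erase_left]
        congr 1
        ext x; simp
      have e3 : ∏ k ∈ (Finset.Icc j m).erase i, (w - zs k)
          = (w - zs j) * ∏ k ∈ (Finset.Icc (j + 1) m).erase i, (w - zs k) := by
        rw [← e2]
        exact (Finset.mul_prod_erase _ _ hjmem).symm
      have e4 : ∏ k ∈ Finset.Icc 1 (j + 1 - 1), (zs i - zs k)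
          = (∏ k ∈ Finset.Icc 1 (j - 1), (zs i - zs k)) * (zs i - zs j) := by
        have : j + 1 - 1 = j := rfl
        rw [this]
        obtain ⟨b, rfl⟩ : ∃ b, j = b + 1 := ⟨j - 1, (Nat.succ_pred_eq_of_pos hj0).symm⟩
        rw [Finset.prod_Icc_succ_top (Nat.le_add_left 1 b)]
        simp
      rw [hB]
      simp only
      rw [e1, e3, e4]
      ring
  rw [Finset.sum_congr rfl key]
  have htel : ∑ j ∈ Finset.Ioc 0 i, (B j - B (j + 1)) = B 1 - B (i + 1) := by
    have : Finset.Ioc 0 i = Finset.Ico 1 (i + 1) := by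
      ext x; simp; omega
    rw [this, Finset.sum_Ico_eq_sum_range]
    simp only [Nat.add_sub_cancel]
    have := Finset.sum_range_sub' (fun t => B (1 + t)) i
    simpa [add_comm, add_assoc, add_left_comm] using this
  rw [htel]
  have hB1 : B 1 = ∏ k ∈ (Finset.Icc 1 m).erase i, (w - zs k) := by
    rw [hB]; simp
  have hBi : B (i + 1) = 0 := by
    rw [hB]
    simp only
    have : (∏ k ∈ Finset.Icc 1 (i + 1 - 1), (zs i - zs k)) = 0 := by
      apply Finset.prod_eq_zero (i := i)
      · simpa using Finset.mem_Icc.mpr ⟨hi1, le_refl i⟩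
      · exact sub_self _
    rw [this, zero_mul]
  rw [hB1, hBi, sub_zero, hIoc]

/-- For pairwise distinct `z_1,...,z_m` and all `w, z`:
`∑_j ∏_{k≠j}(z - z_k) ∏_{k≠j}(w - z_k) / ∏_{k≠j}(z_j - z_k)
  = ∑_j [∏_{k=1}^{j-1}(z - z_k)][∏_{k=j+1}^m (w - z_k)]`. -/
theorem P_eq_Q (m : ℕ) (zs : ℕ → ℂ)
    (hzs : Set.InjOn zs (Finset.Icc 1 m : Set ℕ)) (w z : ℂ) :
    ∑ j ∈ Finset.Icc 1 m,
      (∏ k ∈ (Finset.Icc 1 m).erase j, (z - zs k)) *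
        (∏ k ∈ (Finset.Icc 1 m).erase j, (w - zs k)) /
        ∏ k ∈ (Finset.Icc 1 m).erase j, (zs j - zs k) =
    ∑ j ∈ Finset.Icc 1 m,
      (∏ k ∈ Finset.Icc 1 (j - 1), (z - zs k)) *
        ∏ k ∈ Finset.Icc (j + 1) m, (w - zs k) := by
  rcases Nat.eq_zero_or_pos m with rfl | hm
  · simp
  set S := Finset.Icc 1 m with hS
  have hcard : S.card = m := by rw [hS, Nat.card_Icc]; omega
  -- the two polynomials
  set P : ℂ[X] := ∑ j ∈ S,
      Polynomial.C ((∏ k ∈ S.erase j, (w - zs k)) / ∏ k ∈ S.erase j, (zs j - zs k)) *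
        ∏ k ∈ S.erase j, (X - Polynomial.C (zs k)) with hP
  set Q : ℂ[X] := ∑ j ∈ S,
      (∏ k ∈ Finset.Icc 1 (j - 1), (X - Polynomial.C (zs k))) *
        Polynomial.C (∏ k ∈ Finset.Icc (j + 1) m, (w - zs k)) with hQ
  have hdprod : ∀ t : Finset ℕ, (∏ k ∈ t, (X - Polynomial.C (zs k))).degree = (t.card : WithBot ℕ) := by
    intro t
    rw [Polynomial.degree_prod]
    simp [Polynomial.degree_X_sub_C]
  have hbot : (⊥ : WithBot ℕ) < (S.card : WithBot ℕ) := by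
    rw [hcard]; exact_mod_cast WithBot.bot_lt_coe m
  have hdegP : P.degree < S.card := by
    refine lt_of_le_of_lt (Polynomial.degree_sum_le _ _) ?_
    rw [Finset.sup_lt_iff hbot]
    intro j hj
    refine lt_of_le_of_lt (Polynomial.degree_mul_le _ _) ?_
    rw [hdprod]
    refine lt_of_le_of_lt (add_le_add_left (Polynomial.degree_C_le) _) ?_
    rw [zero_add, Finset.card_erase_of_mem hj, hcard]
    exact_mod_cast Nat.sub_lt hm one_pos
  have hdegQ : Q.degree < S.card := by
    refine lt_of_le_of_lt (Polynomial.degree_sum_le _ _) ?_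
    rw [Finset.sup_lt_iff hbot]
    intro j hj
    obtain ⟨hj1, hjm⟩ := Finset.mem_Icc.mp (hS ▸ hj)
    refine lt_of_le_of_lt (Polynomial.degree_mul_le _ _) ?_
    rw [hdprod]
    refine lt_of_le_of_lt (add_le_add_right (Polynomial.degree_C_le) _) ?_
    rw [add_zero, Nat.card_Icc, hcard]
    exact_mod_cast Nat.lt_of_le_of_lt (Nat.sub_le_sub_right hjm 1) (by omega)
  have heval : ∀ i ∈ S, P.eval (zs i) = Q.eval (zs i) := by
    intro i hi
    have hne : (∏ k ∈ S.erase i, (zs i - zs k)) ≠ 0 := by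
      apply Finset.prod_ne_zero_iff.mpr
      intro k hk
      obtain ⟨hki, hkS⟩ := Finset.mem_erase.mp hk
      refine sub_ne_zero.mpr fun h => hki ?_
      exact (hzs (Finset.mem_coe.mpr hi) (Finset.mem_coe.mpr hkS) h).symm
    have hPe : P.eval (zs i) = ∏ k ∈ S.erase i, (w - zs k) := by
      rw [hP, Polynomial.eval_finset_sum]
      rw [Finset.sum_eq_single_of_mem i hi]
      · simp only [Polynomial.eval_mul, Polynomial.eval_C, Polynomial.eval_prod,
          Polynomial.eval_sub, Polynomial.eval_X]
        rw [div_mul_cancel₀ _ hne]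
      · intro j hj hji
        simp only [Polynomial.eval_mul, Polynomial.eval_C, Polynomial.eval_prod,
          Polynomial.eval_sub, Polynomial.eval_X]
        have : (∏ k ∈ S.erase j, (zs i - zs k)) = 0 := by
          apply Finset.prod_eq_zero (Finset.mem_erase.mpr ⟨Ne.symm hji, hi⟩)
          exact sub_self _
        rw [this, mul_zero]
    have hQe : Q.eval (zs i) = ∏ k ∈ S.erase i, (w - zs k) := by
      rw [hQ, Polynomial.eval_finset_sum]
      simp only [Polynomial.eval_mul, Polynomial.eval_C, Polynomial.eval_prod,
        Polynomial.eval_sub, Polynomial.eval_X]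
      exact telescope_aux m i zs (hS ▸ hi) w
    rw [hPe, hQe]
  have hPQ : P = Q :=
    Polynomial.eq_of_degrees_lt_of_eval_index_eq S hzs hdegP hdegQ heval
  have hLHS : P.eval z = ∑ j ∈ S,
      (∏ k ∈ S.erase j, (z - zs k)) *
        (∏ k ∈ S.erase j, (w - zs k)) /
        ∏ k ∈ S.erase j, (zs j - zs k) := by
    rw [hP, Polynomial.eval_finset_sum]
    apply Finset.sum_congr rfl
    intro j hj
    simp only [Polynomial.eval_mul, Polynomial.eval_C, Polynomial.eval_prod,
      Polynomial.eval_sub, Polynomial.eval_X]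
    ring
  have hRHS : Q.eval z = ∑ j ∈ S,
      (∏ k ∈ Finset.Icc 1 (j - 1), (z - zs k)) *
        ∏ k ∈ Finset.Icc (j + 1) m, (w - zs k) := by
    rw [hQ, Polynomial.eval_finset_sum]
    apply Finset.sum_congr rfl
    intro j hj
    simp only [Polynomial.eval_mul, Polynomial.eval_C, Polynomial.eval_prod,
      Polynomial.eval_sub, Polynomial.eval_X]
  rw [← hLHS, ← hRHS, hPQ]
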